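/- Let Φ be of class 𝒫 with parameters 1 < p < q < ∞ and let c > 0. Then the constant K = ∫₀^∞ max(s^{−1/p}, s^{−1/q})·e^{−cs} ds is finite, and for every t > 0: ∫₀^∞ e^{−crt} / Φ⁻¹(r) dr ≤ K / (t·Φ⁻¹(1/t)). -/

import Mathlib

open MeasureTheory Set Filter Topology ENNReal

noncomputable section

/-- `Φ` is of class `𝒫` with parameters `1 < p < q < ∞`. -/
def IsClassP (Φ Φinv : ℝ → ℝ) (p q : ℝ) : Prop :=
  1 < p ∧ p < q ∧
  (∀ t : ℝ, 0 < t → 0 < Φ t) ∧ (∀ t : ℝ, 0 < t → 0 < Φinv t) ∧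
  (∀ t : ℝ, 0 < t → Φinv (Φ t) = t) ∧ (∀ t : ℝ, 0 < t → Φ (Φinv t) = t) ∧
  ∃ ρ : ℝ → ℝ, ContinuousOn ρ (Set.Ioi 0) ∧ ConcaveOn ℝ (Set.Ioi 0) ρ ∧
    (∀ t : ℝ, 0 < t → 0 < ρ t) ∧
    (∀ s t : ℝ, 0 < s → 0 < t → ρ (s * t) ≤ max 1 s * ρ t) ∧
    (∀ t : ℝ, 0 < t → Φinv t = t ^ (1/p) * ρ (t ^ (1/q - 1/p)))

/-- Change of variables `s = t * r` in a lower Lebesgue integral over `(0, ∞)`. -/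
lemma lint_scale_aux (g : ℝ → ℝ≥0∞) {t : ℝ} (ht : 0 < t) :
    ∫⁻ r in Set.Ioi (0:ℝ), g (t * r) = (ENNReal.ofReal t)⁻¹ * ∫⁻ s in Set.Ioi (0:ℝ), g s := by
  have he : MeasurableEmbedding (fun r : ℝ => t * r) := by
    have := (Homeomorph.mulLeft₀ t ht.ne').measurableEmbedding
    simpa [Homeomorph.coe_mulLeft₀] using this
  have hmap : ((volume : Measure ℝ).restrict (Set.Ioi 0)).map (fun r : ℝ => t * r)
      = (ENNReal.ofReal t)⁻¹ • (volume : Measure ℝ).restrict (Set.Ioi 0) := by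
    have h1 := he.restrict_map (volume : Measure ℝ) (Set.Ioi 0)
    have hpre : (fun r : ℝ => t * r) ⁻¹' (Set.Ioi 0) = Set.Ioi 0 := by
      ext x; simp [Set.mem_Ioi, mul_pos_iff_of_pos_left ht]
    rw [hpre] at h1
    rw [← h1, Real.map_volume_mul_left ht.ne', Measure.restrict_smul,
      abs_of_pos (inv_pos.2 ht), ENNReal.ofReal_inv_of_pos ht]
  calc ∫⁻ r in Set.Ioi (0:ℝ), g (t * r)
      = ∫⁻ s, g s ∂(((volume : Measure ℝ).restrict (Set.Ioi 0)).map (fun r : ℝ => t * r)) :=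
        (he.lintegral_map g).symm
    _ = (ENNReal.ofReal t)⁻¹ * ∫⁻ s in Set.Ioi (0:ℝ), g s := by
        rw [hmap, lintegral_smul_measure, smul_eq_mul]

/-- The key ingredient: `min (u^{1/p}, u^{1/q}) · Φ⁻¹(v) ≤ Φ⁻¹(uv)`. -/
lemma key_aux (Φinv : ℝ → ℝ) (p q : ℝ)
    (ρ : ℝ → ℝ)
    (hρmax : ∀ s t : ℝ, 0 < s → 0 < t → ρ (s * t) ≤ max 1 s * ρ t)
    (hform : ∀ t : ℝ, 0 < t → Φinv t = t ^ (1/p) * ρ (t ^ (1/q - 1/p)))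
    (u v : ℝ) (hu : 0 < u) (hv : 0 < v) :
    min (u ^ (1/p)) (u ^ (1/q)) * Φinv v ≤ Φinv (u * v) := by
  set δ := 1/q - 1/p with hδ
  have huv : 0 < u * v := mul_pos hu hv
  set M := max 1 (u ^ (-δ)) with hM
  set m := min (u ^ (1/p)) (u ^ (1/q)) with hm
  have hmM : m * M = u ^ (1/p) := by
    have huq : u ^ (1/q) = u ^ (1/p) * u ^ δ := by
      rw [← Real.rpow_add hu, hδ]; ring_nf
    have hud : u ^ (1/p) = u ^ (1/q) * u ^ (-δ) := by
      rw [← Real.rpow_add hu, hδ]; ring_nf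
    rcases le_total (u ^ (-δ)) 1 with h | h
    · have h2 : (1:ℝ) ≤ u ^ δ := by
        rw [Real.rpow_neg hu.le] at h
        have hpos := Real.rpow_pos_of_pos hu δ
        nlinarith [mul_inv_cancel₀ hpos.ne', mul_le_mul_of_nonneg_right h hpos.le]
      have : u ^ (1/p) ≤ u ^ (1/q) := by
        rw [huq]; nlinarith [Real.rpow_pos_of_pos hu (1/p)]
      rw [hm, hM, min_eq_left this, max_eq_left h, mul_one]
    · have h2 : u ^ δ ≤ 1 := by
        rw [Real.rpow_neg hu.le] at h
        have hpos := Real.rpow_pos_of_pos hu δ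
        nlinarith [mul_inv_cancel₀ hpos.ne', mul_le_mul_of_nonneg_right h hpos.le]
      have : u ^ (1/q) ≤ u ^ (1/p) := by
        rw [huq]; nlinarith [Real.rpow_pos_of_pos hu (1/p)]
      rw [hm, hM, min_eq_right this, max_eq_right h, ← hud]
  have hρv : ρ (v ^ δ) ≤ M * ρ ((u*v) ^ δ) := by
    have : v ^ δ = u ^ (-δ) * (u*v) ^ δ := by
      rw [Real.mul_rpow hu.le hv.le, ← mul_assoc, ← Real.rpow_add hu, neg_add_cancel,
        Real.rpow_zero, one_mul]
    rw [this]
    exact hρmax _ _ (Real.rpow_pos_of_pos hu _) (Real.rpow_pos_of_pos huv _)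
  have hmpos : 0 < m := lt_min (Real.rpow_pos_of_pos hu _) (Real.rpow_pos_of_pos hu _)
  rw [hform v hv, hform (u*v) huv, Real.mul_rpow hu.le hv.le]
  calc m * (v ^ (1/p) * ρ (v ^ δ))
      ≤ m * (v ^ (1/p) * (M * ρ ((u*v) ^ δ))) := by
        apply mul_le_mul_of_nonneg_left _ hmpos.le
        exact mul_le_mul_of_nonneg_left hρv (Real.rpow_pos_of_pos hv _).le
    _ = (m * M) * (v ^ (1/p) * ρ ((u*v) ^ δ)) := by ring
    _ = u ^ (1/p) * v ^ (1/p) * ρ ((u*v) ^ δ) := by rw [hmM]; ring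

/-- Finiteness of the constant `K`. -/
lemma K_fin_aux (p q c : ℝ) (hp : 1 < p) (hpq : p < q) (hc : 0 < c) :
    (∫⁻ s in Set.Ioi (0:ℝ),
        ENNReal.ofReal (max (s ^ (-(1/p))) (s ^ (-(1/q))) * Real.exp (-(c * s)))) < ∞ := by
  have hsplit : Set.Ioi (0:ℝ) = Set.Ioo 0 1 ∪ Set.Ici 1 := (Set.Ioo_union_Ici_eq_Ioi one_pos).symm
  have hdisj : Disjoint (Set.Ioo (0:ℝ) 1) (Set.Ici 1) :=
    Set.disjoint_left.mpr fun x hx hx' => absurd hx.2 (not_lt.mpr hx')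
  rw [hsplit, lintegral_union measurableSet_Ici hdisj]
  have fin1 : (∫⁻ s in Set.Ioo (0:ℝ) 1,
      ENNReal.ofReal (max (s ^ (-(1/p))) (s ^ (-(1/q))) * Real.exp (-(c * s)))) < ∞ := by
    have hint : IntegrableOn (fun s : ℝ => s ^ (-(1/p))) (Set.Ioo 0 1) := by
      refine (intervalIntegral.integrableOn_Ioo_rpow_iff one_pos).2 ?_
      have : 1/p < 1 := by rw [div_lt_one (lt_trans one_pos hp)]; exact hp
      linarith
    calc (∫⁻ s in Set.Ioo (0:ℝ) 1,
          ENNReal.ofReal (max (s ^ (-(1/p))) (s ^ (-(1/q))) * Real.exp (-(c * s))))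
        ≤ ∫⁻ s in Set.Ioo (0:ℝ) 1, (‖s ^ (-(1/p))‖₊ : ℝ≥0∞) := by
          refine setLIntegral_mono' measurableSet_Ioo fun s hs => ?_
          refine le_trans ?_ (Real.ofReal_le_enorm _)
          apply ENNReal.ofReal_le_ofReal
          have h1 : s ^ (-(1/q)) ≤ s ^ (-(1/p)) := by
            apply Real.rpow_le_rpow_of_exponent_ge hs.1 hs.2.le
            have := one_div_le_one_div_of_le (lt_trans one_pos hp) hpq.le
            linarith
          have h2 : Real.exp (-(c * s)) ≤ 1 := by
            rw [Real.exp_le_one_iff]; nlinarith [hs.1]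
          calc max (s ^ (-(1/p))) (s ^ (-(1/q))) * Real.exp (-(c * s))
              ≤ s ^ (-(1/p)) * 1 :=
                mul_le_mul (max_le le_rfl h1) h2 (Real.exp_pos _).le
                  (Real.rpow_pos_of_pos hs.1 _).le
            _ = s ^ (-(1/p)) := mul_one _
      _ < ∞ := hint.2
  have fin2 : (∫⁻ s in Set.Ici (1:ℝ),
      ENNReal.ofReal (max (s ^ (-(1/p))) (s ^ (-(1/q))) * Real.exp (-(c * s)))) < ∞ := by
    have hint : IntegrableOn (fun s : ℝ => Real.exp (-c * s)) (Set.Ici 1) :=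
      (exp_neg_integrableOn_Ioi 0 hc).mono_set fun x hx => Set.mem_Ioi.2 (lt_of_lt_of_le one_pos (Set.mem_Ici.1 hx))
    calc (∫⁻ s in Set.Ici (1:ℝ),
          ENNReal.ofReal (max (s ^ (-(1/p))) (s ^ (-(1/q))) * Real.exp (-(c * s))))
        ≤ ∫⁻ s in Set.Ici (1:ℝ), (‖Real.exp (-c * s)‖₊ : ℝ≥0∞) := by
          refine setLIntegral_mono' measurableSet_Ici fun s hs => ?_
          refine le_trans ?_ (Real.ofReal_le_enorm _)
          apply ENNReal.ofReal_le_ofReal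
          have h1 : max (s ^ (-(1/p))) (s ^ (-(1/q))) ≤ 1 := by
            have hq := hp.trans hpq
            apply max_le
            · exact Real.rpow_le_one_of_one_le_of_nonpos hs
                (neg_nonpos.2 (div_nonneg zero_le_one (by linarith)))
            · exact Real.rpow_le_one_of_one_le_of_nonpos hs
                (neg_nonpos.2 (div_nonneg zero_le_one (by linarith)))
          calc max (s ^ (-(1/p))) (s ^ (-(1/q))) * Real.exp (-(c * s))
              ≤ 1 * Real.exp (-(c * s)) :=
                mul_le_mul_of_nonneg_right h1 (Real.exp_pos _).le
            _ = Real.exp (-c * s) := by rw [one_mul, neg_mul]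
      _ < ∞ := hint.2
  exact ENNReal.add_lt_top.2 ⟨fin1, fin2⟩

/-- for `Φ` of class `𝒫` and `c > 0`, the constant
`K = ∫₀^∞ max(s^{−1/p}, s^{−1/q})·e^{−cs} ds` is finite and
`∫₀^∞ e^{−crt}/Φ⁻¹(r) dr ≤ K/(t·Φ⁻¹(1/t))` for every `t > 0`. -/
theorem integral_exp_div_inv_bound
    (Φ Φinv : ℝ → ℝ) (p q : ℝ) (hΦ : IsClassP Φ Φinv p q) (c : ℝ) (hc : 0 < c) :
    (∫⁻ s in Set.Ioi (0:ℝ),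
        ENNReal.ofReal (max (s ^ (-(1/p))) (s ^ (-(1/q))) * Real.exp (-(c * s)))) < ∞ ∧
    ∀ t : ℝ, 0 < t →
      (∫⁻ r in Set.Ioi (0:ℝ), ENNReal.ofReal (Real.exp (-(c * r * t)) / Φinv r))
        ≤ (∫⁻ s in Set.Ioi (0:ℝ),
            ENNReal.ofReal (max (s ^ (-(1/p))) (s ^ (-(1/q))) * Real.exp (-(c * s)))) /
          ENNReal.ofReal (t * Φinv (1/t)) := by
  obtain ⟨hp, hpq, -, hinvpos, -, -, ρ, -, -, hρpos, hρmax, hform⟩ := hΦ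
  have hq : 1 < q := hp.trans hpq
  refine ⟨K_fin_aux p q c hp hpq hc, fun t ht => ?_⟩
  set B : ℝ := Φinv (1/t) with hBdef
  have hB : 0 < B := hinvpos _ (by positivity)
  have hBR : (0:ℝ≥0∞) < ENNReal.ofReal B := ENNReal.ofReal_pos.2 hB
  set G : ℝ → ℝ≥0∞ :=
    fun s => ENNReal.ofReal (max (s ^ (-(1/p))) (s ^ (-(1/q))) * Real.exp (-(c * s))) with hG
  have hbound : ∀ r ∈ Set.Ioi (0:ℝ),
      ENNReal.ofReal (Real.exp (-(c * r * t)) / Φinv r) ≤ G (t * r) / ENNReal.ofReal B := by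
    intro r hr
    have hr : 0 < r := hr
    have hu : 0 < t * r := mul_pos ht hr
    have hmin : 0 < min ((t*r) ^ (1/p)) ((t*r) ^ (1/q)) :=
      lt_min (Real.rpow_pos_of_pos hu _) (Real.rpow_pos_of_pos hu _)
    have hkey : min ((t*r) ^ (1/p)) ((t*r) ^ (1/q)) * B ≤ Φinv r := by
      have := key_aux Φinv p q ρ hρmax hform (t*r) (1/t) hu (by positivity)
      have heq : t * r * (1/t) = r := by field_simp
      rwa [heq] at this
    have hΦr : 0 < Φinv r := hinvpos r hr
    have hmB : 0 < min ((t*r) ^ (1/p)) ((t*r) ^ (1/q)) * B := mul_pos hmin hB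
    have hreal : Real.exp (-(c * r * t)) / Φinv r
        ≤ max ((t*r) ^ (-(1/p))) ((t*r) ^ (-(1/q))) * Real.exp (-(c * (t*r))) / B := by
      have hinv : (min ((t*r) ^ (1/p)) ((t*r) ^ (1/q)))⁻¹
          = max ((t*r) ^ (-(1/p))) ((t*r) ^ (-(1/q))) := by
        rw [Real.rpow_neg hu.le, Real.rpow_neg hu.le]
        rcases le_total ((t*r) ^ (1/p)) ((t*r) ^ (1/q)) with h | h
        · rw [min_eq_left h, max_eq_left (inv_anti₀ (Real.rpow_pos_of_pos hu _) h)]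
        · rw [min_eq_right h, max_eq_right (inv_anti₀ (Real.rpow_pos_of_pos hu _) h)]
      have h1 : Real.exp (-(c * r * t)) / Φinv r
          ≤ Real.exp (-(c * r * t)) / (min ((t*r) ^ (1/p)) ((t*r) ^ (1/q)) * B) := by
        apply div_le_div_of_nonneg_left (Real.exp_pos _).le hmB hkey
      refine h1.trans (le_of_eq ?_)
      rw [div_mul_eq_div_div, div_eq_mul_inv (Real.exp _), hinv]
      have : c * (t * r) = c * r * t := by ring
      rw [this, mul_comm (Real.exp _)]
    calc ENNReal.ofReal (Real.exp (-(c * r * t)) / Φinv r)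
        ≤ ENNReal.ofReal
            (max ((t*r) ^ (-(1/p))) ((t*r) ^ (-(1/q))) * Real.exp (-(c * (t*r))) / B) :=
          ENNReal.ofReal_le_ofReal hreal
      _ = G (t * r) / ENNReal.ofReal B := by rw [ENNReal.ofReal_div_of_pos hB]
  have hBinv_ne_top : (ENNReal.ofReal B)⁻¹ ≠ ∞ := ENNReal.inv_ne_top.2 hBR.ne'
  calc (∫⁻ r in Set.Ioi (0:ℝ), ENNReal.ofReal (Real.exp (-(c * r * t)) / Φinv r))
      ≤ ∫⁻ r in Set.Ioi (0:ℝ), G (t * r) / ENNReal.ofReal B :=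
        setLIntegral_mono' measurableSet_Ioi hbound
    _ = (∫⁻ r in Set.Ioi (0:ℝ), G (t * r)) * (ENNReal.ofReal B)⁻¹ := by
        simp_rw [div_eq_mul_inv]
        exact lintegral_mul_const' _ _ hBinv_ne_top
    _ = ((ENNReal.ofReal t)⁻¹ * ∫⁻ s in Set.Ioi (0:ℝ), G s) * (ENNReal.ofReal B)⁻¹ := by
        rw [lint_scale_aux G ht]
    _ = (∫⁻ s in Set.Ioi (0:ℝ), G s) / ENNReal.ofReal (t * B) := by
        rw [ENNReal.ofReal_mul ht.le, div_eq_mul_inv,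
          ENNReal.mul_inv (Or.inr ENNReal.ofReal_ne_top) (Or.inl ENNReal.ofReal_ne_top)]
        ring
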